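/- Let X be a 2-dimensional matroidal fan in R^n (the Bergman fan of a loopless rank-3 matroid). Then dim F_2(X) = 1 - |E(X)| + |F(X)|, where |E(X)| and |F(X)| are the numbers of rays and 2-dimensional cones of X. Equivalently, the Euler characteristic count (number of 0-cones) - (number of rays) + (number of 2-cones) of the fan equals dim F_2(X). -/

import Mathlib

open scoped BigOperators
open Polynomial

/-- The rank of a set `S` in a matroid `M`: the largest cardinality of an independent
subset of `S`. -/
noncomputable def mrank {α : Type*} (M : Matroid α) (S : Set α) : ℕ :=
  sSup {n | ∃ I, I ⊆ S ∧ M.Indep I ∧ I.ncard = n}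

/-- A matroid is loopless if every singleton of the ground set is independent. -/
def MLoopless {α : Type*} (M : Matroid α) : Prop := ∀ a ∈ M.E, M.Indep {a}

/-- The ambient space `ℝ^{n+1}/ℝ·1` of the (projective) Bergman fan. -/
abbrev BergSpace (n : ℕ) :=
  (Fin (n + 1) → ℝ) ⧸ (Submodule.span ℝ {(fun _ => (1 : ℝ) : Fin (n + 1) → ℝ)})

/-- The class `ē_F ∈ ℝ^{n+1}/ℝ·1` of the indicator vector `e_F = Σ_{i ∈ F} e_i`. -/
noncomputable def eQ {n : ℕ} (F : Set (Fin (n + 1))) : BergSpace n :=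
  Submodule.Quotient.mk (F.indicator (fun _ => (1 : ℝ)))

/-- The cone `σ_𝓕 = {-Σ_F t_F ē_F : t_F ≥ 0}` of the Bergman fan associated to a finite
chain `c` of flats. -/
noncomputable def chainCone {n : ℕ} (c : Finset (Set (Fin (n + 1)))) : Set (BergSpace n) :=
  {x | ∃ t : Set (Fin (n + 1)) → ℝ, (∀ F, 0 ≤ t F) ∧ x = -∑ F ∈ c, t F • eQ F}

/-- A proper nonempty flat of `M`. -/
def ProperFlat {α : Type*} (M : Matroid α) (F : Set α) : Prop :=
  M.IsFlat F ∧ F.Nonempty ∧ F ≠ Set.univ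

/-- The (projective) Bergman fan of a matroid on `{0, …, n}`, as the collection of the
cones `σ_𝓕` over all chains `𝓕` of proper nonempty flats. -/
noncomputable def bergmanFan {n : ℕ} (M : Matroid (Fin (n + 1))) : Set (Set (BergSpace n)) :=
  {σ | ∃ c : Finset (Set (Fin (n + 1))), (∀ F ∈ c, ProperFlat M F) ∧
    IsChain (· ⊆ ·) (↑c : Set (Set (Fin (n + 1)))) ∧ σ = chainCone c}

/-- `F_p(Σ) ⊆ ⋀^p V`: the span of the wedges `v₁ ∧ ⋯ ∧ v_p` of vectors lying in a common
cone of `Σ`, realized inside the exterior algebra of `V`. -/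
noncomputable def FpFan {V : Type*} [AddCommGroup V] [Module ℝ V] (S : Set (Set V)) (p : ℕ) :
    Submodule ℝ (ExteriorAlgebra ℝ V) :=
  Submodule.span ℝ {w | ∃ σ ∈ S, ∃ v : Fin p → V, (∀ i, v i ∈ σ) ∧
    w = (List.ofFn fun i => ExteriorAlgebra.ι ℝ (v i)).prod}


set_option linter.unusedSectionVars false
set_option linter.unusedVariables false
set_option maxHeartbeats 1000000
set_option synthInstance.maxHeartbeats 1000000
section RankTheory
variable {α : Type*} [Fintype α] {M : Matroid α} {S T I F G : Set α}

lemma matroid_closure_flat (M : Matroid α) (X : Set α) : M.IsFlat (M.closure X) := by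
  rw [Matroid.closure_def]
  have hne : Nonempty {F // M.IsFlat F ∧ X ∩ M.E ⊆ F} :=
    ⟨⟨M.E, M.ground_isFlat, Set.inter_subset_right⟩⟩
  have hne' : Nonempty ↑{F | M.IsFlat F ∧ X ∩ M.E ⊆ F} := hne
  rw [Set.sInter_eq_iInter]
  exact Matroid.IsFlat.iInter fun F => F.2.1

lemma mrank_bddAbove : BddAbove {n | ∃ I, I ⊆ S ∧ M.Indep I ∧ I.ncard = n} := by
  refine ⟨Fintype.card α, ?_⟩
  rintro n ⟨J, _, _, rfl⟩
  exact (Set.ncard_le_ncard (Set.subset_univ J)).trans (by simp [Set.ncard_univ])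

lemma mrank_eq_of_basis' (hI : M.IsBasis' I S) : mrank M S = I.ncard := by
  apply le_antisymm
  · refine csSup_le ⟨0, ∅, Set.empty_subset _, M.empty_indep, Set.ncard_empty _⟩ ?_
    rintro n ⟨J, hJS, hJ, rfl⟩
    by_contra hlt
    push_neg at hlt
    have hcard : I.encard < J.encard := by
      rw [← (Set.toFinite I).cast_ncard_eq, ← (Set.toFinite J).cast_ncard_eq]
      exact_mod_cast hlt
    obtain ⟨e, he, hins⟩ := hI.indep.augment hJ hcard
    exact hI.insert_not_indep ⟨hJS he.1, he.2⟩ hins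
  · exact le_csSup mrank_bddAbove ⟨I, hI.subset, hI.indep, rfl⟩

lemma mrank_indep (hI : M.Indep I) : mrank M I = I.ncard :=
  mrank_eq_of_basis' (hI.isBasis_self.isBasis')

lemma mrank_mono (M : Matroid α) (h : S ⊆ T) : mrank M S ≤ mrank M T := by
  obtain ⟨I, hI⟩ := M.exists_isBasis' S
  rw [mrank_eq_of_basis' hI]
  exact le_csSup mrank_bddAbove ⟨I, hI.subset.trans h, hI.indep, rfl⟩

lemma mrank_closure (M : Matroid α) (S : Set α) : mrank M (M.closure S) = mrank M S := by
  obtain ⟨I, hI⟩ := M.exists_isBasis' S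
  rw [mrank_eq_of_basis' hI, mrank_eq_of_basis' hI.isBasis_closure_right.isBasis']

lemma mrank_le_ncard (S : Set α) : mrank M S ≤ S.ncard := by
  obtain ⟨I, hI⟩ := M.exists_isBasis' S
  rw [mrank_eq_of_basis' hI]
  exact Set.ncard_le_ncard hI.subset (Set.toFinite S)

variable (hE : M.E = Set.univ)
include hE

lemma flat_eq_of_subset_mrank_le (hF : M.IsFlat F) (hG : M.IsFlat G) (hFG : F ⊆ G)
    (hr : mrank M G ≤ mrank M F) : F = G := by
  obtain ⟨I, hI⟩ := M.exists_isBasis' F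
  obtain ⟨J, hJ, hIJ⟩ := hI.indep.subset_isBasis'_of_subset (hI.subset.trans hFG)
  have hcard : J.ncard ≤ I.ncard := by
    rw [← mrank_eq_of_basis' hI, ← mrank_eq_of_basis' hJ]; exact hr
  have hIJ' : I = J := Set.eq_of_subset_of_ncard_le hIJ hcard (Set.toFinite J)
  apply hFG.antisymm
  have h1 : M.closure G ⊆ M.closure J := hJ.isBasis_closure_right.subset_closure
  rw [← hIJ'] at h1
  calc G ⊆ M.closure G := M.subset_closure G (by simp [hE])
    _ ⊆ M.closure I := h1
    _ ⊆ M.closure F := M.closure_subset_closure hI.subset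
    _ = F := hF.closure

lemma mrank_lt_of_flat_ssubset (hF : M.IsFlat F) (hG : M.IsFlat G) (hFG : F ⊂ G) :
    mrank M F < mrank M G := by
  rcases lt_or_ge (mrank M F) (mrank M G) with h | h
  · exact h
  · exact absurd (flat_eq_of_subset_mrank_le hE hF hG hFG.subset h) hFG.ne

lemma closure_eq_univ_of_mrank_eq (hr : mrank M Set.univ ≤ mrank M S) :
    M.closure S = Set.univ := by
  have huniv : M.IsFlat Set.univ := by rw [← hE]; exact M.ground_isFlat
  apply flat_eq_of_subset_mrank_le hE (matroid_closure_flat M S) huniv (Set.subset_univ _)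
  rw [mrank_closure]; exact hr

lemma mrank_singleton (hl : MLoopless M) (a : α) : mrank M {a} = 1 := by
  rw [mrank_indep (hl a (by simp [hE])), Set.ncard_singleton]

lemma mem_closure_singleton_self (a : α) : a ∈ M.closure {a} :=
  M.mem_closure_self a (by simp [hE])

lemma mrank_closure_singleton (hl : MLoopless M) (a : α) : mrank M (M.closure {a}) = 1 := by
  rw [mrank_closure, mrank_singleton hE hl]

lemma one_le_mrank_of_nonempty (hl : MLoopless M) (hS : S.Nonempty) : 1 ≤ mrank M S := by
  obtain ⟨a, ha⟩ := hS
  have := mrank_mono (M := M) (Set.singleton_subset_iff.mpr ha)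
  rwa [mrank_singleton hE hl] at this

end RankTheory
section PtLn
variable {α : Type*} [Fintype α] {M : Matroid α} {p q L L' F G : Set α} {a : α}

def IsPt (M : Matroid α) (F : Set α) : Prop := ProperFlat M F ∧ mrank M F = 1
def IsLn (M : Matroid α) (F : Set α) : Prop := ProperFlat M F ∧ mrank M F = 2

variable (hE : M.E = Set.univ) (hl : MLoopless M) (hrank : mrank M Set.univ = 3)
include hE hl hrank

lemma isPt_closure_singleton (a : α) : IsPt M (M.closure {a}) := by
  refine ⟨⟨matroid_closure_flat M _, ⟨a, mem_closure_singleton_self hE a⟩, ?_⟩,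
    mrank_closure_singleton hE hl a⟩
  intro h
  have h1 := mrank_closure_singleton hE hl (M := M) a
  rw [h, hrank] at h1
  omega

lemma IsPt.eq_closure (hp : IsPt M p) (ha : a ∈ p) : p = M.closure {a} := by
  refine (flat_eq_of_subset_mrank_le hE (matroid_closure_flat M _) hp.1.1 ?_ ?_).symm
  · rw [← hp.1.1.closure]; exact M.closure_subset_closure (Set.singleton_subset_iff.mpr ha)
  · rw [hp.2, mrank_closure_singleton hE hl]

lemma IsPt.disjoint (hp : IsPt M p) (hq : IsPt M q) (hne : p ≠ q) (ha : a ∈ p) : a ∉ q := by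
  intro haq
  exact hne ((hp.eq_closure hE hl hrank ha).trans (hq.eq_closure hE hl hrank haq).symm)

lemma ProperFlat.rank_cases (hF : ProperFlat M F) : IsPt M F ∨ IsLn M F := by
  have h1 : 1 ≤ mrank M F := one_le_mrank_of_nonempty hE hl hF.2.1
  have h3 : mrank M F ≠ 3 ∧ mrank M F ≤ 3 := by
    constructor
    · intro h
      exact hF.2.2 (hF.1.closure ▸ closure_eq_univ_of_mrank_eq hE (by omega))
    · rw [← hrank]; exact mrank_mono M (Set.subset_univ F)
  rcases Nat.lt_or_ge (mrank M F) 2 with h | h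
  · exact Or.inl ⟨hF, by omega⟩
  · exact Or.inr ⟨hF, by omega⟩

lemma pt_ln_of_ssubset (hF : ProperFlat M F) (hG : ProperFlat M G) (hss : F ⊂ G) :
    IsPt M F ∧ IsLn M G := by
  have hlt := mrank_lt_of_flat_ssubset hE hF.1 hG.1 hss
  rcases hF.rank_cases hE hl hrank with h1 | h1 <;>
    rcases hG.rank_cases hE hl hrank with h2 | h2
  · exact absurd hlt (by rw [h1.2, h2.2]; omega)
  · exact ⟨h1, h2⟩
  · exact absurd hlt (by rw [h1.2, h2.2]; omega)
  · exact absurd hlt (by rw [h1.2, h2.2]; omega)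

lemma IsLn.pt_subset (hL : IsLn M L) (ha : a ∈ L) : M.closure {a} ⊆ L := by
  rw [← hL.1.1.closure]
  exact M.closure_subset_closure (Set.singleton_subset_iff.mpr ha)

lemma isLn_closure_union (hp : IsPt M p) (hap : a ∉ p) :
    IsLn M (M.closure (p ∪ {a})) ∧ p ⊆ M.closure (p ∪ {a}) ∧ a ∈ M.closure (p ∪ {a}) := by
  obtain ⟨x, hx⟩ := hp.1.2.1
  have hpx : p = M.closure {x} := hp.eq_closure hE hl hrank hx
  have hsub : p ⊆ M.closure (p ∪ {a}) :=
    (M.subset_closure_of_subset Set.subset_union_left (by simp [hE]))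
  have hain : a ∈ M.closure (p ∪ {a}) :=
    (M.subset_closure_of_subset Set.subset_union_right (by simp [hE])) rfl
  have hr2 : mrank M (M.closure (p ∪ {a})) = 2 := by
    have hup : mrank M (M.closure (p ∪ {a})) ≤ 2 := by
      have hsub2 : p ∪ {a} ⊆ M.closure {x, a} := by
        rw [Set.union_subset_iff, Set.singleton_subset_iff]
        constructor
        · rw [hpx]
          exact M.closure_subset_closure (by simp)
        · exact M.subset_closure _ (by simp [hE]) (by simp)
      calc mrank M (M.closure (p ∪ {a})) = mrank M (p ∪ {a}) := mrank_closure M _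
        _ ≤ mrank M (M.closure {x, a}) := mrank_mono M hsub2
        _ = mrank M {x, a} := mrank_closure M _
        _ ≤ ({x, a} : Set α).ncard := mrank_le_ncard _
        _ ≤ 2 := by
            rcases eq_or_ne x a with h | h
            · simp [h]
            · rw [Set.ncard_pair h]
    have hss : p ⊂ M.closure (p ∪ {a}) := (Set.ssubset_iff_of_subset hsub).mpr ⟨a, hain, hap⟩
    have hlt := mrank_lt_of_flat_ssubset hE hp.1.1 (matroid_closure_flat M _) hss
    rw [hp.2] at hlt
    omega
  refine ⟨⟨⟨matroid_closure_flat M _, ⟨a, hain⟩, ?_⟩, hr2⟩, hsub, hain⟩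
  intro h
  rw [h, hrank] at hr2; omega

lemma IsLn.eq_closure_union (hL : IsLn M L) (hp : IsPt M p) (hpL : p ⊆ L) (haL : a ∈ L)
    (hap : a ∉ p) : L = M.closure (p ∪ {a}) := by
  obtain ⟨hK, _, _⟩ := isLn_closure_union hE hl hrank hp hap
  refine (flat_eq_of_subset_mrank_le hE hK.1.1 hL.1.1 ?_ (by rw [hL.2, hK.2])).symm
  rw [← hL.1.1.closure]
  exact M.closure_subset_closure (Set.union_subset hpL (Set.singleton_subset_iff.mpr haL))

/-- uniqueness of the line through a point `p` and an element `a ∉ p`. -/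
lemma line_unique (hL : IsLn M L) (hL' : IsLn M L') (hp : IsPt M p)
    (hpL : p ⊆ L) (haL : a ∈ L) (hpL' : p ⊆ L') (haL' : a ∈ L') (hap : a ∉ p) : L = L' := by
  rw [hL.eq_closure_union hE hl hrank hp hpL haL hap,
    hL'.eq_closure_union hE hl hrank hp hpL' haL' hap]

/-- uniqueness of the line through two distinct points. -/
lemma line_unique_pts (hL : IsLn M L) (hL' : IsLn M L') (hp : IsPt M p) (hq : IsPt M q)
    (hne : p ≠ q) (hpL : p ⊆ L) (hqL : q ⊆ L) (hpL' : p ⊆ L') (hqL' : q ⊆ L') : L = L' := by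
  obtain ⟨a, ha⟩ := hq.1.2.1
  have hap : a ∉ p := fun h => (hp.disjoint hE hl hrank hq hne h) ha
  exact line_unique hE hl hrank hL hL' hp hpL (hqL ha) hpL' (hqL' ha) hap

/-- existence of the line through two distinct points. -/
lemma line_exists_pts (hp : IsPt M p) (hq : IsPt M q) (hne : p ≠ q) :
    ∃ L, IsLn M L ∧ p ⊆ L ∧ q ⊆ L := by
  obtain ⟨a, ha⟩ := hq.1.2.1
  have hap : a ∉ p := fun h => (hp.disjoint hE hl hrank hq hne h) ha
  obtain ⟨hK, hpK, haK⟩ := isLn_closure_union hE hl hrank hp hap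
  refine ⟨_, hK, hpK, ?_⟩
  rw [hq.eq_closure hE hl hrank ha]
  exact hK.pt_subset hE hl hrank haK

lemma exists_not_mem_of_properFlat (hF : ProperFlat M F) : ∃ a, a ∉ F := by
  by_contra h
  push_neg at h
  exact hF.2.2 (Set.eq_univ_of_forall h)

/-- every point lies on at least one line -/
lemma pt_exists_line (hp : IsPt M p) : ∃ L, IsLn M L ∧ p ⊆ L := by
  obtain ⟨a, ha⟩ := exists_not_mem_of_properFlat hE hl hrank hp.1
  obtain ⟨hK, hpK, _⟩ := isLn_closure_union hE hl hrank hp ha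
  exact ⟨_, hK, hpK⟩

/-- every line contains at least one point -/
lemma ln_exists_pt (hL : IsLn M L) : ∃ p, IsPt M p ∧ p ⊆ L := by
  obtain ⟨a, ha⟩ := hL.1.2.1
  exact ⟨_, isPt_closure_singleton hE hl hrank a, hL.pt_subset hE hl hrank ha⟩

/-- the set of points within `L` containing a given `a ∈ L` is `{cl {a}}`. -/
lemma pts_on_line_through (hL : IsLn M L) (ha : a ∈ L) :
    {p | IsPt M p ∧ p ⊆ L ∧ a ∈ p} = {M.closure {a}} := by
  apply Set.eq_singleton_iff_unique_mem.mpr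
  refine ⟨⟨isPt_closure_singleton hE hl hrank a, hL.pt_subset hE hl hrank ha,
    mem_closure_singleton_self hE a⟩, ?_⟩
  rintro p ⟨hp, _, hap⟩
  exact hp.eq_closure hE hl hrank hap

lemma pts_through (a : α) : {p | IsPt M p ∧ a ∈ p} = {M.closure {a}} := by
  apply Set.eq_singleton_iff_unique_mem.mpr
  refine ⟨⟨isPt_closure_singleton hE hl hrank a, mem_closure_singleton_self hE a⟩, ?_⟩
  rintro p ⟨hp, hap⟩
  exact hp.eq_closure hE hl hrank hap

/-- the set of lines through `p` containing `a ∉ p` is a singleton. -/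
lemma lines_through_pt_elt (hp : IsPt M p) (hap : a ∉ p) :
    {L | IsLn M L ∧ p ⊆ L ∧ a ∈ L} = {M.closure (p ∪ {a})} := by
  obtain ⟨hK, hpK, haK⟩ := isLn_closure_union hE hl hrank hp hap
  apply Set.eq_singleton_iff_unique_mem.mpr
  refine ⟨⟨hK, hpK, haK⟩, ?_⟩
  rintro L ⟨hL, hpL, haL⟩
  exact hL.eq_closure_union hE hl hrank hp hpL haL hap

end PtLn
section Functional
variable {W : Type*} [AddCommGroup W] [Module ℝ W]

noncomputable def wedgeForm (g h : W →ₗ[ℝ] ℝ) : W [⋀^Fin 2]→ₗ[ℝ] ℝ where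
  toMultilinearMap :=
    (MultilinearMap.mkPiAlgebraFin ℝ 2 ℝ).compLinearMap ![g, h] -
      (MultilinearMap.mkPiAlgebraFin ℝ 2 ℝ).compLinearMap ![h, g]
  map_eq_zero_of_eq' := by
    intro v i j hv hij
    have h01 : v 0 = v 1 := by
      fin_cases i <;> fin_cases j <;> simp_all
    simp [MultilinearMap.mkPiAlgebraFin_apply, List.ofFn_succ, h01]
    ring

lemma wedgeForm_apply (g h : W →ₗ[ℝ] ℝ) (v : Fin 2 → W) :
    wedgeForm g h v = g (v 0) * h (v 1) - g (v 1) * h (v 0) := by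
  simp [wedgeForm, MultilinearMap.mkPiAlgebraFin_apply, List.ofFn_succ]
  ring

noncomputable def Lam (g h : W →ₗ[ℝ] ℝ) : ExteriorAlgebra ℝ W →ₗ[ℝ] ℝ :=
  ExteriorAlgebra.liftAlternating
    (fun i => match i with
      | 2 => wedgeForm g h
      | _ => 0)

lemma Lam_ι_mul_ι (g h : W →ₗ[ℝ] ℝ) (v w : W) :
    Lam g h (ExteriorAlgebra.ι ℝ v * ExteriorAlgebra.ι ℝ w) =
      g v * h w - g w * h v := by
  rw [Lam, ExteriorAlgebra.liftAlternating_ι_mul, ExteriorAlgebra.liftAlternating_ι]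
  show (wedgeForm g h).curryLeft v ![w] = _
  rw [AlternatingMap.curryLeft_apply_apply, wedgeForm_apply]
  simp [Matrix.cons_val_zero, Matrix.cons_val_one]

end Functional

section Main
variable {n : ℕ} {M : Matroid (Fin (n + 1))}

/-- the indicator vector in `ℝ^{n+1}`. -/
noncomputable def eV {n : ℕ} (F : Set (Fin (n + 1))) : Fin (n + 1) → ℝ :=
  F.indicator (fun _ => (1 : ℝ))

noncomputable abbrev oneSub (n : ℕ) : Submodule ℝ (Fin (n + 1) → ℝ) :=
  Submodule.span ℝ {(fun _ => (1 : ℝ) : Fin (n + 1) → ℝ)}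

lemma eQ_eq_mkQ (F : Set (Fin (n + 1))) : eQ F = (oneSub n).mkQ (eV F) := rfl

open Classical in
lemma eV_apply (F : Set (Fin (n + 1))) (a : Fin (n + 1)) :
    eV F a = if a ∈ F then (1 : ℝ) else 0 := by
  simp [eV, Set.indicator_apply]

open Classical in
lemma sum_ite_card {β : Type*} (s : Finset β) (P : β → Prop) :
    (∑ b ∈ s, if P b then (1 : ℝ) else 0) = ((s.filter P).card : ℝ) := by
  rw [← Finset.sum_filter]
  simp

lemma mkQ_one : (oneSub n).mkQ (fun _ => (1 : ℝ)) = 0 := by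
  rw [Submodule.mkQ_apply, Submodule.Quotient.mk_eq_zero]
  exact Submodule.mem_span_singleton_self _

variable (hE : M.E = Set.univ) (hl : MLoopless M) (hrank : mrank M Set.univ = 3)
include hE hl hrank

lemma sum_eV_pts {L : Set (Fin (n + 1))} (hL : IsLn M L) :
    ∑ p ∈ (Set.toFinite {p | IsPt M p ∧ p ⊆ L}).toFinset, eV p = eV L := by
  classical
  funext a
  rw [Finset.sum_apply]
  simp_rw [eV_apply, sum_ite_card]
  by_cases haL : a ∈ L
  · have hset := pts_on_line_through hE hl hrank hL haL
    have hfil : ((Set.toFinite {p | IsPt M p ∧ p ⊆ L}).toFinset.filter (fun p => a ∈ p))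
        = {M.closure {a}} := by
      ext p
      have := Set.ext_iff.mp hset p
      simp only [Set.mem_setOf_eq, Set.mem_singleton_iff] at this
      simp only [Finset.mem_filter, Set.Finite.mem_toFinset, Set.mem_setOf_eq,
        Finset.mem_singleton]
      constructor
      · rintro ⟨⟨h1, h2⟩, h3⟩; exact this.mp ⟨h1, h2, h3⟩
      · intro h; obtain ⟨h1, h2, h3⟩ := this.mpr h; exact ⟨⟨h1, h2⟩, h3⟩
    rw [hfil]
    simp [haL]
  · have hfil : ((Set.toFinite {p | IsPt M p ∧ p ⊆ L}).toFinset.filter (fun p => a ∈ p))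
        = ∅ := by
      ext p
      simp only [Finset.mem_filter, Set.Finite.mem_toFinset, Set.mem_setOf_eq,
        Finset.notMem_empty, iff_false, not_and]
      rintro ⟨h1, h2⟩ h3
      exact haL (h2 h3)
    rw [hfil]
    simp [haL]

lemma sum_eV_lines {p : Set (Fin (n + 1))} (hp : IsPt M p) :
    ∑ L ∈ (Set.toFinite {L | IsLn M L ∧ p ⊆ L}).toFinset, eV L
      = (fun _ => (1 : ℝ)) +
        ((((Set.toFinite {L | IsLn M L ∧ p ⊆ L}).toFinset.card : ℝ) - 1) • eV p) := by
  classical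
  funext a
  rw [Finset.sum_apply]
  simp_rw [eV_apply, sum_ite_card]
  rw [Pi.add_apply, Pi.smul_apply, eV_apply]
  by_cases hap : a ∈ p
  · have hfil : ((Set.toFinite {L | IsLn M L ∧ p ⊆ L}).toFinset.filter (fun L => a ∈ L))
        = (Set.toFinite {L | IsLn M L ∧ p ⊆ L}).toFinset := by
      apply Finset.filter_true_of_mem
      intro L hL
      rw [Set.Finite.mem_toFinset] at hL
      exact hL.2 hap
    rw [hfil]
    simp only [hap, if_pos, smul_eq_mul, mul_one]
    ring
  · have hset := lines_through_pt_elt hE hl hrank hp hap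
    have hfil : ((Set.toFinite {L | IsLn M L ∧ p ⊆ L}).toFinset.filter (fun L => a ∈ L))
        = {M.closure (p ∪ {a})} := by
      ext L
      have := Set.ext_iff.mp hset L
      simp only [Set.mem_setOf_eq, Set.mem_singleton_iff] at this
      simp only [Finset.mem_filter, Set.Finite.mem_toFinset, Set.mem_setOf_eq,
        Finset.mem_singleton]
      constructor
      · rintro ⟨⟨h1, h2⟩, h3⟩; exact this.mp ⟨h1, h2, h3⟩
      · intro h; obtain ⟨h1, h2, h3⟩ := this.mpr h; exact ⟨⟨h1, h2⟩, h3⟩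
    rw [hfil]
    simp [hap]

lemma sum_eQ_pts {L : Set (Fin (n + 1))} (hL : IsLn M L) :
    ∑ p ∈ (Set.toFinite {p | IsPt M p ∧ p ⊆ L}).toFinset, eQ p = eQ L := by
  simp_rw [eQ_eq_mkQ, ← map_sum]
  rw [show (∑ p ∈ (Set.toFinite {p | IsPt M p ∧ p ⊆ L}).toFinset, eV p) = eV L from
    sum_eV_pts hE hl hrank hL]

lemma sum_eQ_lines {p : Set (Fin (n + 1))} (hp : IsPt M p) :
    ∑ L ∈ (Set.toFinite {L | IsLn M L ∧ p ⊆ L}).toFinset, eQ L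
      = (((Set.toFinite {L | IsLn M L ∧ p ⊆ L}).toFinset.card : ℝ) - 1) • eQ p := by
  simp_rw [eQ_eq_mkQ, ← map_sum]
  rw [show (∑ L ∈ (Set.toFinite {L | IsLn M L ∧ p ⊆ L}).toFinset, eV L) = _ from
    sum_eV_lines hE hl hrank hp]
  rw [map_add, map_smul, mkQ_one, zero_add]

end Main

section Maps
variable {n : ℕ} {M : Matroid (Fin (n + 1))}

abbrev PFt (M : Matroid (Fin (n + 1))) := {F : Set (Fin (n + 1)) // ProperFlat M F}
abbrev Ct (M : Matroid (Fin (n + 1))) :=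
  {q : Set (Fin (n + 1)) × Set (Fin (n + 1)) // ProperFlat M q.1 ∧ ProperFlat M q.2 ∧ q.1 ⊂ q.2}

noncomputable instance : Fintype (PFt M) := Fintype.ofFinite _
noncomputable instance : Fintype (Ct M) := Fintype.ofFinite _

noncomputable def wv (c : Ct M) : ExteriorAlgebra ℝ (BergSpace n) :=
  ExteriorAlgebra.ι ℝ (eQ c.1.1) * ExteriorAlgebra.ι ℝ (eQ c.1.2)

noncomputable def phiM (M : Matroid (Fin (n + 1))) :
    (Ct M → ℝ) →ₗ[ℝ] ExteriorAlgebra ℝ (BergSpace n) :=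
  Fintype.linearCombination ℝ (wv (M := M))

noncomputable def d1M (M : Matroid (Fin (n + 1))) : (PFt M → ℝ) →ₗ[ℝ] (Ct M → ℝ) where
  toFun := fun y c => y ⟨c.1.1, c.2.1⟩ + y ⟨c.1.2, c.2.2.1⟩
  map_add' := fun y z => funext fun c => add_add_add_comm _ _ _ _
  map_smul' := fun r y => funext fun c => (mul_add r _ _).symm

open Classical in
lemma neg_eQ_mem_chainCone {c : Finset (Set (Fin (n + 1)))} {F : Set (Fin (n + 1))}
    (hF : F ∈ c) : -eQ F ∈ chainCone c := by
  classical
  refine ⟨fun H => if H = F then 1 else 0, fun H => by positivity, ?_⟩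
  congr 1
  rw [show (∑ H ∈ c, (if H = F then (1:ℝ) else 0) • eQ H)
    = ∑ H ∈ c, (if H = F then eQ H else 0) from Finset.sum_congr rfl (fun H _ => by
      rw [ite_smul, one_smul, zero_smul])]
  rw [Finset.sum_ite_eq' c F (fun H => eQ H), if_pos hF]

lemma listProd_pair (v : Fin 2 → BergSpace n) :
    (List.ofFn fun i => ExteriorAlgebra.ι ℝ (v i)).prod
      = ExteriorAlgebra.ι ℝ (v 0) * ExteriorAlgebra.ι ℝ (v 1) := by
  rw [show (List.ofFn fun i => ExteriorAlgebra.ι ℝ (v i))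
    = [ExteriorAlgebra.ι ℝ (v 0), ExteriorAlgebra.ι ℝ (v 1)] from by
      rw [List.ofFn_succ, List.ofFn_succ, List.ofFn_zero]; rfl]
  rw [List.prod_cons, List.prod_cons, List.prod_nil, mul_one]

open Classical in
lemma pairCone_mem_bergmanFan {F G : Set (Fin (n + 1))} (hF : ProperFlat M F)
    (hG : ProperFlat M G) (hFG : F ⊆ G) : chainCone {F, G} ∈ bergmanFan M := by
  classical
  refine ⟨{F, G}, ?_, ?_, rfl⟩
  · intro H hH
    rcases Finset.mem_insert.mp hH with h | h
    · exact h ▸ hF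
    · exact (Finset.mem_singleton.mp h) ▸ hG
  · intro x hx y hy hne
    simp only [Finset.coe_insert, Finset.coe_singleton, Set.mem_insert_iff,
      Set.mem_singleton_iff] at hx hy
    rcases hx with rfl | rfl <;> rcases hy with rfl | rfl
    · exact absurd rfl hne
    · exact Or.inl hFG
    · exact Or.inr hFG
    · exact absurd rfl hne

open Classical in
lemma wv_mem_FpFan (c : Ct M) : wv c ∈ FpFan (bergmanFan M) 2 := by
  apply Submodule.subset_span
  refine ⟨chainCone {c.1.1, c.1.2},
    pairCone_mem_bergmanFan c.2.1 c.2.2.1 c.2.2.2.subset,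
    ![-eQ c.1.1, -eQ c.1.2], ?_, ?_⟩
  · intro i
    fin_cases i
    · exact neg_eQ_mem_chainCone (by simp)
    · exact neg_eQ_mem_chainCone (by simp)
  · rw [listProd_pair]
    show wv c = ExteriorAlgebra.ι ℝ (-eQ c.1.1) * ExteriorAlgebra.ι ℝ (-eQ c.1.2)
    rw [map_neg, map_neg, neg_mul_neg]
    rfl

lemma FpFan_le_range (hE : M.E = Set.univ) (hl : MLoopless M) (hrank : mrank M Set.univ = 3) :
    FpFan (bergmanFan M) 2 ≤ LinearMap.range (phiM M) := by
  classical
  rw [FpFan, phiM, Fintype.range_linearCombination]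
  apply Submodule.span_le.mpr
  rintro w ⟨σ, ⟨c, hcP, hcC, rfl⟩, v, hv, rfl⟩
  rw [listProd_pair]
  obtain ⟨t0, ht0, hv0⟩ := hv 0
  obtain ⟨t1, ht1, hv1⟩ := hv 1
  have h0 : ExteriorAlgebra.ι ℝ (v 0) = -∑ F ∈ c, t0 F • ExteriorAlgebra.ι ℝ (eQ F) := by
    rw [hv0, map_neg, map_sum]
    simp_rw [map_smul]
  have h1 : ExteriorAlgebra.ι ℝ (v 1) = -∑ G ∈ c, t1 G • ExteriorAlgebra.ι ℝ (eQ G) := by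
    rw [hv1, map_neg, map_sum]
    simp_rw [map_smul]
  rw [h0, h1, neg_mul_neg, Finset.sum_mul_sum]
  apply Submodule.sum_mem
  intro F hF
  apply Submodule.sum_mem
  intro G hG
  rw [smul_mul_smul_comm]
  apply Submodule.smul_mem
  rcases eq_or_ne F G with rfl | hne
  · rw [ExteriorAlgebra.ι_sq_zero]
    exact Submodule.zero_mem _
  · rcases hcC hF hG hne with hss | hss
    · have hFG : F ⊂ G := ⟨hss, fun h => hne (hss.antisymm h)⟩
      exact Submodule.subset_span ⟨⟨(F, G), hcP F hF, hcP G hG, hFG⟩, rfl⟩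
    · have hGF : G ⊂ F := ⟨hss, fun h => hne (h.antisymm hss)⟩
      have : ExteriorAlgebra.ι ℝ (eQ F) * ExteriorAlgebra.ι ℝ (eQ G)
          = -(ExteriorAlgebra.ι ℝ (eQ G) * ExteriorAlgebra.ι ℝ (eQ F)) := by
        exact eq_neg_of_add_eq_zero_left (ExteriorAlgebra.ι_add_mul_swap (eQ F) (eQ G))
      rw [this]
      exact Submodule.neg_mem _ (Submodule.subset_span ⟨⟨(G, F), hcP G hG, hcP F hF, hGF⟩, rfl⟩)

lemma FpFan_eq_range (hE : M.E = Set.univ) (hl : MLoopless M) (hrank : mrank M Set.univ = 3) :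
    FpFan (bergmanFan M) 2 = LinearMap.range (phiM M) := by
  refine le_antisymm (FpFan_le_range hE hl hrank) ?_
  rw [phiM, Fintype.range_linearCombination]
  apply Submodule.span_le.mpr
  rintro w ⟨c, rfl⟩
  exact wv_mem_FpFan c

end Maps

section Relations
variable {n : ℕ} {M : Matroid (Fin (n + 1))}

noncomputable def cP (c : Ct M) : PFt M := ⟨c.1.1, c.2.1⟩
noncomputable def cL (c : Ct M) : PFt M := ⟨c.1.2, c.2.2.1⟩

lemma IsLn.not_isPt {L : Set (Fin (n + 1))} (hL : IsLn M L) : ¬ IsPt M L := by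
  intro h
  rw [IsPt, hL.2] at h
  exact absurd h.2 (by omega)

variable (hE : M.E = Set.univ) (hl : MLoopless M) (hrank : mrank M Set.univ = 3)
include hE hl hrank

lemma ct_pt_ln (c : Ct M) : IsPt M c.1.1 ∧ IsLn M c.1.2 :=
  pt_ln_of_ssubset hE hl hrank c.2.1 c.2.2.1 c.2.2.2

lemma mk_ct_mem {p L : Set (Fin (n + 1))} (hp : IsPt M p) (hL : IsLn M L) (hsub : p ⊆ L) :
    ProperFlat M p ∧ ProperFlat M L ∧ p ⊂ L := by
  refine ⟨hp.1, hL.1, hsub, fun h => ?_⟩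
  have h2 : p = L := hsub.antisymm h
  have e1 := hp.2
  have e2 := hL.2
  rw [h2] at e1
  have : (1 : ℕ) = 2 := e1.symm.trans e2
  exact absurd this (by omega)

open Classical in
lemma claimA (P : PFt M) : ∑ c : {c : Ct M // cP c = P}, wv c.1 = 0 := by
  by_cases hP : IsPt M P.1
  · have hsum : ∑ c : {c : Ct M // cP c = P}, wv c.1
        = ∑ L ∈ (Set.toFinite {L | IsLn M L ∧ P.1 ⊆ L}).toFinset,
          ExteriorAlgebra.ι ℝ (eQ P.1) * ExteriorAlgebra.ι ℝ (eQ L) := by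
      apply Finset.sum_bij' (i := fun c _ => c.1.1.2)
        (j := fun L hL => ⟨⟨(P.1, L),
          mk_ct_mem hE hl hrank hP
            (by rw [Set.Finite.mem_toFinset] at hL; exact hL.1)
            (by rw [Set.Finite.mem_toFinset] at hL; exact hL.2)⟩, Subtype.ext rfl⟩)
      · intro c _
        apply Subtype.ext
        apply Subtype.ext
        have h2 : c.1.1.1 = P.1 := congrArg Subtype.val c.2
        exact Prod.ext h2.symm rfl
      · intro L hL
        rfl
      · intro c _
        have h2 : c.1.1.1 = P.1 := congrArg Subtype.val c.2
        rw [wv, h2]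
      · intro c _
        have h1 := (ct_pt_ln hE hl hrank c.1).2
        have h2 : c.1.1.1 = P.1 := congrArg Subtype.val c.2
        simp only [Set.Finite.mem_toFinset, Set.mem_setOf_eq]
        exact ⟨h1, h2 ▸ c.1.2.2.2.subset⟩
      · intro L hL
        exact Finset.mem_univ _
    rw [hsum, ← Finset.mul_sum, ← map_sum, sum_eQ_lines hE hl hrank hP, map_smul,
      mul_smul_comm, ExteriorAlgebra.ι_sq_zero, smul_zero]
  · apply Finset.sum_eq_zero
    intro c _
    have h1 := (ct_pt_ln hE hl hrank c.1).1
    have h2 : c.1.1.1 = P.1 := congrArg Subtype.val c.2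
    exact absurd (h2 ▸ h1) hP

open Classical in
lemma claimB (P : PFt M) : ∑ c : {c : Ct M // cL c = P}, wv c.1 = 0 := by
  by_cases hP : IsLn M P.1
  · have hsum : ∑ c : {c : Ct M // cL c = P}, wv c.1
        = ∑ p ∈ (Set.toFinite {p | IsPt M p ∧ p ⊆ P.1}).toFinset,
          ExteriorAlgebra.ι ℝ (eQ p) * ExteriorAlgebra.ι ℝ (eQ P.1) := by
      apply Finset.sum_bij' (i := fun c _ => c.1.1.1)
        (j := fun p hp => ⟨⟨(p, P.1),
          mk_ct_mem hE hl hrank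
            (by rw [Set.Finite.mem_toFinset] at hp; exact hp.1) hP
            (by rw [Set.Finite.mem_toFinset] at hp; exact hp.2)⟩, Subtype.ext rfl⟩)
      · intro c _
        apply Subtype.ext
        apply Subtype.ext
        have h2 : c.1.1.2 = P.1 := congrArg Subtype.val c.2
        exact Prod.ext rfl h2.symm
      · intro p hp
        rfl
      · intro c _
        have h2 : c.1.1.2 = P.1 := congrArg Subtype.val c.2
        rw [wv, h2]
      · intro c _
        have h1 := (ct_pt_ln hE hl hrank c.1).1
        have h2 : c.1.1.2 = P.1 := congrArg Subtype.val c.2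
        simp only [Set.Finite.mem_toFinset, Set.mem_setOf_eq]
        exact ⟨h1, h2 ▸ c.1.2.2.2.subset⟩
      · intro p hp
        exact Finset.mem_univ _
    rw [hsum, ← Finset.sum_mul, ← map_sum, sum_eQ_pts hE hl hrank hP,
      ExteriorAlgebra.ι_sq_zero]
  · apply Finset.sum_eq_zero
    intro c _
    have h1 := (ct_pt_ln hE hl hrank c.1).2
    have h2 : c.1.1.2 = P.1 := congrArg Subtype.val c.2
    exact absurd (h2 ▸ h1) hP

open Classical in
lemma phi_comp_d1 (y : PFt M → ℝ) : phiM M (d1M M y) = 0 := by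
  rw [phiM, Fintype.linearCombination_apply]
  have hterm : ∀ c : Ct M, d1M M y c • wv c = y (cP c) • wv c + y (cL c) • wv c := by
    intro c
    rw [show d1M M y c = y (cP c) + y (cL c) from rfl, add_smul]
  simp_rw [hterm]
  rw [Finset.sum_add_distrib]
  have hA : ∑ c : Ct M, y (cP c) • wv c = 0 := by
    rw [← Fintype.sum_fiberwise (cP (M := M)) (fun c => y (cP c) • wv c)]
    apply Finset.sum_eq_zero
    intro P _
    have : ∀ c : {c : Ct M // cP c = P}, y (cP c.1) • wv c.1 = y P • wv c.1 := by
      intro c; rw [c.2]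
    rw [Finset.sum_congr rfl (fun c _ => this c), ← Finset.smul_sum,
      claimA hE hl hrank P, smul_zero]
  have hB : ∑ c : Ct M, y (cL c) • wv c = 0 := by
    rw [← Fintype.sum_fiberwise (cL (M := M)) (fun c => y (cL c) • wv c)]
    apply Finset.sum_eq_zero
    intro P _
    have : ∀ c : {c : Ct M // cL c = P}, y (cL c.1) • wv c.1 = y P • wv c.1 := by
      intro c; rw [c.2]
    rw [Finset.sum_congr rfl (fun c _ => this c), ← Finset.smul_sum,
      claimB hE hl hrank P, smul_zero]
  rw [hA, hB, add_zero]

end Relations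

section Kernel
variable {n : ℕ} {M : Matroid (Fin (n + 1))}

open Classical in
noncomputable def uVec (M : Matroid (Fin (n + 1))) : PFt M → ℝ :=
  fun P => if IsPt M P.1 then 1 else -1

variable (hE : M.E = Set.univ) (hl : MLoopless M) (hrank : mrank M Set.univ = 3)
include hE hl hrank

open Classical in
lemma d1_u_zero : d1M M (uVec M) = 0 := by
  funext c
  obtain ⟨h1, h2⟩ := ct_pt_ln hE hl hrank c
  show uVec M ⟨c.1.1, _⟩ + uVec M ⟨c.1.2, _⟩ = 0
  rw [uVec, if_pos h1, uVec, if_neg h2.not_isPt]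
  ring

open Classical in
lemma ker_d1 : LinearMap.ker (d1M M) = Submodule.span ℝ {uVec M} := by
  apply le_antisymm
  · intro x hx
    rw [LinearMap.mem_ker] at hx
    have hx' : ∀ c : Ct M, x (cP c) + x (cL c) = 0 := by
      intro c
      have := congrFun hx c
      exact this
    set P0 : PFt M := ⟨M.closure {0}, (isPt_closure_singleton hE hl hrank 0).1⟩ with hP0
    have hP0pt : IsPt M P0.1 := isPt_closure_singleton hE hl hrank 0
    have key : ∀ Q : PFt M, IsPt M Q.1 → x Q = x P0 := by
      intro Q hQ
      by_cases hq0 : Q = P0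
      · rw [hq0]
      · have hne : Q.1 ≠ P0.1 := fun h => hq0 (Subtype.ext h)
        obtain ⟨L, hL, hQL, hP0L⟩ := line_exists_pts hE hl hrank hQ hP0pt hne
        have c1 : Ct M := ⟨(Q.1, L), mk_ct_mem hE hl hrank hQ hL hQL⟩
        have c2 : Ct M := ⟨(P0.1, L), mk_ct_mem hE hl hrank hP0pt hL hP0L⟩
        have e1 := hx' ⟨(Q.1, L), mk_ct_mem hE hl hrank hQ hL hQL⟩
        have e2 := hx' ⟨(P0.1, L), mk_ct_mem hE hl hrank hP0pt hL hP0L⟩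
        have e1' : x Q + x ⟨L, hL.1⟩ = 0 := e1
        have e2' : x P0 + x ⟨L, hL.1⟩ = 0 := e2
        linarith
    have hxu : x = x P0 • uVec M := by
      funext P
      rw [Pi.smul_apply, uVec, smul_eq_mul]
      rcases P.2.rank_cases hE hl hrank with hpt | hln
      · rw [if_pos hpt, mul_one]
        exact key P hpt
      · rw [if_neg hln.not_isPt]
        obtain ⟨q, hq, hqP⟩ := ln_exists_pt hE hl hrank hln
        have e1 := hx' ⟨(q, P.1), mk_ct_mem hE hl hrank hq hln hqP⟩
        have e1' : x ⟨q, hq.1⟩ + x P = 0 := e1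
        have e2 := key ⟨q, hq.1⟩ hq
        linarith
    rw [hxu]
    exact Submodule.smul_mem _ _ (Submodule.mem_span_singleton_self _)
  · rw [Submodule.span_le, Set.singleton_subset_iff]
    exact LinearMap.mem_ker.mpr (d1_u_zero hE hl hrank)

open Classical in
lemma uVec_ne_zero : uVec M ≠ 0 := by
  intro h
  have := congrFun h ⟨M.closure {0}, (isPt_closure_singleton hE hl hrank 0).1⟩
  rw [uVec] at this
  rw [if_pos (isPt_closure_singleton hE hl hrank 0)] at this
  norm_num at this

end Kernel

section Hard
variable {n : ℕ} {M : Matroid (Fin (n + 1))}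

noncomputable def qDiff (n : ℕ) (b1 b2 : Fin (n + 1)) : BergSpace n →ₗ[ℝ] ℝ :=
  (oneSub n).liftQ
    (LinearMap.proj (R := ℝ) (φ := fun _ : Fin (n+1) => ℝ) b1 - LinearMap.proj b2) (by
    rw [Submodule.span_le, Set.singleton_subset_iff]
    rw [SetLike.mem_coe, LinearMap.mem_ker, LinearMap.sub_apply,
      LinearMap.proj_apply, LinearMap.proj_apply, sub_self])

open Classical in
lemma qDiff_eQ (b1 b2 : Fin (n + 1)) (F : Set (Fin (n + 1))) :
    qDiff n b1 b2 (eQ F) = (if b1 ∈ F then (1 : ℝ) else 0) - (if b2 ∈ F then 1 else 0) := by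
  rw [show eQ F = Submodule.Quotient.mk (eV F) from rfl, qDiff, Submodule.liftQ_apply]
  rw [LinearMap.sub_apply, LinearMap.proj_apply, LinearMap.proj_apply, eV_apply, eV_apply]

open Classical in
noncomputable def Ssum (x : Ct M → ℝ) (u v : Set (Fin (n + 1))) : ℝ :=
  ∑ c ∈ Finset.univ.filter (fun c : Ct M => c.1.1 = u ∧ v ⊆ c.1.2), x c

open Classical in
lemma Ssum_as_sum (x : Ct M → ℝ) (u v : Set (Fin (n + 1))) :
    Ssum x u v = ∑ c : Ct M,
      x c * (if c.1.1 = u then (1 : ℝ) else 0) * (if v ⊆ c.1.2 then 1 else 0) := by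
  rw [Ssum, Finset.sum_filter]
  apply Finset.sum_congr rfl
  intro c _
  by_cases h1 : c.1.1 = u <;> by_cases h2 : v ⊆ c.1.2 <;> simp [h1, h2]

variable (hE : M.E = Set.univ) (hl : MLoopless M) (hrank : mrank M Set.univ = 3)
include hE hl hrank

lemma mem_pt_iff {w u : Set (Fin (n + 1))} {b : Fin (n + 1)} (hw : IsPt M w) (hu : IsPt M u)
    (hb : b ∈ u) : b ∈ w ↔ w = u :=
  ⟨fun h => (hw.eq_closure hE hl hrank h).trans (hu.eq_closure hE hl hrank hb).symm,
    fun h => h ▸ hb⟩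

lemma mem_ln_iff {w u : Set (Fin (n + 1))} {b : Fin (n + 1)} (hw : IsLn M w) (hu : IsPt M u)
    (hb : b ∈ u) : b ∈ w ↔ u ⊆ w :=
  ⟨fun h => (hu.eq_closure hE hl hrank hb) ▸ hw.pt_subset hE hl hrank h, fun h => h hb⟩

open Classical in
lemma master_eqn {x : Ct M → ℝ} (hx : phiM M x = 0) {p q o : Set (Fin (n + 1))}
    (hp : IsPt M p) (hq : IsPt M q) (ho : IsPt M o) :
    Ssum x p q - Ssum x p o + Ssum x q o - Ssum x q p + Ssum x o p - Ssum x o q = 0 := by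
  obtain ⟨bp, hbp⟩ := hp.1.2.1
  obtain ⟨bq, hbq⟩ := hq.1.2.1
  obtain ⟨bo, hbo⟩ := ho.1.2.1
  have h0 : Lam (qDiff n bp bq) (qDiff n bq bo) (phiM M x) = 0 := by rw [hx, map_zero]
  rw [phiM, Fintype.linearCombination_apply, map_sum] at h0
  simp_rw [map_smul, smul_eq_mul] at h0
  have hterm : ∀ c : Ct M,
      x c * Lam (qDiff n bp bq) (qDiff n bq bo) (wv c)
        = x c * (if c.1.1 = p then (1:ℝ) else 0) * (if q ⊆ c.1.2 then 1 else 0)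
        - x c * (if c.1.1 = p then (1:ℝ) else 0) * (if o ⊆ c.1.2 then 1 else 0)
        + x c * (if c.1.1 = q then (1:ℝ) else 0) * (if o ⊆ c.1.2 then 1 else 0)
        - x c * (if c.1.1 = q then (1:ℝ) else 0) * (if p ⊆ c.1.2 then 1 else 0)
        + x c * (if c.1.1 = o then (1:ℝ) else 0) * (if p ⊆ c.1.2 then 1 else 0)
        - x c * (if c.1.1 = o then (1:ℝ) else 0) * (if q ⊆ c.1.2 then 1 else 0) := by
    intro c
    obtain ⟨hcp, hcl⟩ := ct_pt_ln hE hl hrank c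
    rw [wv, Lam_ι_mul_ι, qDiff_eQ, qDiff_eQ, qDiff_eQ, qDiff_eQ]
    rw [show (bp ∈ c.1.1) = (c.1.1 = p) from propext (mem_pt_iff hE hl hrank hcp hp hbp),
      show (bq ∈ c.1.1) = (c.1.1 = q) from propext (mem_pt_iff hE hl hrank hcp hq hbq),
      show (bo ∈ c.1.1) = (c.1.1 = o) from propext (mem_pt_iff hE hl hrank hcp ho hbo),
      show (bp ∈ c.1.2) = (p ⊆ c.1.2) from propext (mem_ln_iff hE hl hrank hcl hp hbp),
      show (bq ∈ c.1.2) = (q ⊆ c.1.2) from propext (mem_ln_iff hE hl hrank hcl hq hbq),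
      show (bo ∈ c.1.2) = (o ⊆ c.1.2) from propext (mem_ln_iff hE hl hrank hcl ho hbo)]
    split_ifs <;> ring
  rw [Finset.sum_congr rfl (fun c _ => hterm c)] at h0
  simp only [Finset.sum_add_distrib, Finset.sum_sub_distrib] at h0
  rw [Ssum_as_sum, Ssum_as_sum, Ssum_as_sum, Ssum_as_sum, Ssum_as_sum, Ssum_as_sum]
  exact h0

open Classical in
lemma Ssum_singleton {x : Ct M → ℝ} {p q L : Set (Fin (n + 1))} (hp : IsPt M p)
    (hq : IsPt M q) (hne : p ≠ q) (hL : IsLn M L) (hpL : p ⊆ L) (hqL : q ⊆ L) :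
    Ssum x p q = x ⟨(p, L), mk_ct_mem hE hl hrank hp hL hpL⟩ := by
  rw [Ssum]
  rw [show Finset.univ.filter (fun c : Ct M => c.1.1 = p ∧ q ⊆ c.1.2)
      = {⟨(p, L), mk_ct_mem hE hl hrank hp hL hpL⟩} from ?_]
  · rw [Finset.sum_singleton]
  · ext c
    simp only [Finset.mem_filter, Finset.mem_univ, true_and, Finset.mem_singleton]
    constructor
    · rintro ⟨h1, h2⟩
      obtain ⟨hcp, hcl⟩ := ct_pt_ln hE hl hrank c
      have hLeq : c.1.2 = L :=
        line_unique_pts hE hl hrank hcl hL hp hq hne (h1 ▸ c.2.2.2.subset) h2 hpL hqL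
      apply Subtype.ext
      exact Prod.ext h1 hLeq
    · rintro rfl
      exact ⟨rfl, hqL⟩

end Hard

section Final
variable {n : ℕ} {M : Matroid (Fin (n + 1))}
variable (hE : M.E = Set.univ) (hl : MLoopless M) (hrank : mrank M Set.univ = 3)
include hE hl hrank

open Classical in
lemma ker_phi_le_range (x : Ct M → ℝ) (hx : phiM M x = 0) :
    ∃ y : PFt M → ℝ, d1M M y = x := by
  classical
  have hp0 : IsPt M (M.closure {0}) := isPt_closure_singleton hE hl hrank 0
  set p0 : Set (Fin (n + 1)) := M.closure {0} with hp0def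
  set A : Set (Fin (n + 1)) → ℝ := fun u => Ssum x u p0 - Ssum x p0 u with hA
  have keyD : ∀ (p q L : Set (Fin (n + 1))) (hp : IsPt M p) (hq : IsPt M q) (hL : IsLn M L)
      (hpL : p ⊆ L) (hqL : q ⊆ L),
      x ⟨(p, L), mk_ct_mem hE hl hrank hp hL hpL⟩
        - x ⟨(q, L), mk_ct_mem hE hl hrank hq hL hqL⟩ = A p - A q := by
    intro p q L hp hq hL hpL hqL
    rcases eq_or_ne p q with rfl | hne
    · simp
    · rw [← Ssum_singleton hE hl hrank (x := x) hp hq hne hL hpL hqL,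
        ← Ssum_singleton hE hl hrank (x := x) hq hp hne.symm hL hqL hpL]
      rcases eq_or_ne p p0 with rfl | hpp0
      · simp only [hA]; ring
      · rcases eq_or_ne q p0 with rfl | hqp0
        · simp only [hA]; ring
        · have hme := master_eqn hE hl hrank hx hp hq hp0
          simp only [hA]
          linarith
  have hptOf : ∀ P : PFt M, ¬ IsPt M P.1 → ∃ q, IsPt M q ∧ q ⊆ P.1 := by
    intro P h
    have hln : IsLn M P.1 := (P.2.rank_cases hE hl hrank).resolve_left h
    obtain ⟨q, hq1, hq2⟩ := ln_exists_pt hE hl hrank hln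
    exact ⟨q, hq1, hq2⟩
  choose! f hf1 hf2 using hptOf
  refine ⟨fun P => if h : IsPt M P.1 then A P.1
    else x ⟨(f P, P.1), mk_ct_mem hE hl hrank (hf1 P h)
      ((P.2.rank_cases hE hl hrank).resolve_left h) (hf2 P h)⟩ - A (f P), ?_⟩
  funext c
  obtain ⟨hcp, hcl⟩ := ct_pt_ln hE hl hrank c
  show (if h : IsPt M c.1.1 then _ else _) + (if h : IsPt M c.1.2 then _ else _) = x c
  rw [dif_pos hcp, dif_neg hcl.not_isPt]
  have hq : IsPt M (f ⟨c.1.2, c.2.2.1⟩) := hf1 _ hcl.not_isPt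
  have hqL : f ⟨c.1.2, c.2.2.1⟩ ⊆ c.1.2 := hf2 _ hcl.not_isPt
  have hd := keyD c.1.1 (f ⟨c.1.2, c.2.2.1⟩) c.1.2 hcp hq hcl c.2.2.2.subset hqL
  have hxc : x ⟨(c.1.1, c.1.2), mk_ct_mem hE hl hrank hcp hcl c.2.2.2.subset⟩ = x c := rfl
  rw [hxc] at hd
  linarith

lemma ker_phi_eq_range_d1 : LinearMap.ker (phiM M) = LinearMap.range (d1M M) := by
  apply le_antisymm
  · intro x hx
    obtain ⟨y, hy⟩ := ker_phi_le_range hE hl hrank x (LinearMap.mem_ker.mp hx)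
    exact ⟨y, hy⟩
  · rintro _ ⟨y, rfl⟩
    exact LinearMap.mem_ker.mpr (phi_comp_d1 hE hl hrank y)

theorem main_result :
    (Module.finrank ℝ (FpFan (bergmanFan M) 2) : ℤ) =
      1 - (Set.ncard {F : Set (Fin (n + 1)) | ProperFlat M F} : ℤ)
        + (Set.ncard {q : Set (Fin (n + 1)) × Set (Fin (n + 1)) |
            ProperFlat M q.1 ∧ ProperFlat M q.2 ∧ q.1 ⊂ q.2} : ℤ) := by
  classical
  have h1 := LinearMap.finrank_range_add_finrank_ker (phiM M)
  have h2 := LinearMap.finrank_range_add_finrank_ker (d1M M)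
  have h3 : Module.finrank ℝ (LinearMap.ker (d1M M)) = 1 := by
    rw [ker_d1 hE hl hrank]
    exact finrank_span_singleton (uVec_ne_zero hE hl hrank)
  have h4 : Module.finrank ℝ (Ct M → ℝ) = Fintype.card (Ct M) := Module.finrank_pi ℝ
  have h5 : Module.finrank ℝ (PFt M → ℝ) = Fintype.card (PFt M) := Module.finrank_pi ℝ
  have h6 : Module.finrank ℝ (LinearMap.ker (phiM M))
      = Module.finrank ℝ (LinearMap.range (d1M M)) := by
    rw [ker_phi_eq_range_d1 hE hl hrank]
  have h7 : Module.finrank ℝ (FpFan (bergmanFan M) 2)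
      = Module.finrank ℝ (LinearMap.range (phiM M)) := by
    rw [FpFan_eq_range hE hl hrank]
  have h8 : Set.ncard {F : Set (Fin (n + 1)) | ProperFlat M F} = Fintype.card (PFt M) := by
    rw [← Nat.card_coe_set_eq, Nat.card_eq_fintype_card]
    exact Fintype.card_congr' rfl
  have h9 : Set.ncard {q : Set (Fin (n + 1)) × Set (Fin (n + 1)) |
      ProperFlat M q.1 ∧ ProperFlat M q.2 ∧ q.1 ⊂ q.2} = Fintype.card (Ct M) := by
    rw [← Nat.card_coe_set_eq, Nat.card_eq_fintype_card]
    exact Fintype.card_congr' rfl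
  rw [h7, h8, h9]
  rw [h4] at h1
  rw [h5, h3] at h2
  omega

end Final


/-- for the 2-dimensional Bergman fan `X` of a loopless rank-3 matroid,
`dim F₂(X) = 1 - |E(X)| + |F(X)|`, where the rays of `X` are indexed by the proper
nonempty flats of `M` and the 2-dimensional cones by the 2-step chains of such flats;
i.e. the Euler-characteristic count `1 - (#rays) + (#2-cones)` equals `dim F₂(X)`. -/
theorem dim_F2_bergmanFan_rank_three {n : ℕ} (M : Matroid (Fin (n + 1)))
    (hE : M.E = Set.univ) (hl : MLoopless M) (hrank : mrank M Set.univ = 3) :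
    (Module.finrank ℝ (FpFan (bergmanFan M) 2) : ℤ) =
      1 - (Set.ncard {F : Set (Fin (n + 1)) | ProperFlat M F} : ℤ)
        + (Set.ncard {q : Set (Fin (n + 1)) × Set (Fin (n + 1)) |
            ProperFlat M q.1 ∧ ProperFlat M q.2 ∧ q.1 ⊂ q.2} : ℤ) := by
  exact main_result hE hl hrank
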